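/- Let a, T be real numbers with a ≥ T > 0 and let b > 1. If 1 < b ≤ 2, then ∫₀^T t^{−b} e^{−a/t} dt ≤ a^{−1} T^{2−b} e^{−a/T}. If b > 2, then there exists a constant C(b), depending only on b, such that ∫₀^T t^{−b} e^{−a/t} dt ≤ C(b) a^{1−b} e^{−a/(2T)}. -/

import Mathlib

open MeasureTheory

-- sup of x^c e^{-x}
lemma aux1 (c : ℝ) (hc : 0 ≤ c) (x : ℝ) (hx : 0 < x) :
    x ^ c * Real.exp (-x) ≤ (Nat.factorial (Nat.ceil c)) + 1 := by
  rcases le_or_gt x 1 with h1 | h1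
  · have h2 : x ^ c ≤ 1 := Real.rpow_le_one hx.le h1 hc
    have h3 : Real.exp (-x) ≤ 1 := Real.exp_le_one_iff.mpr (by linarith)
    nlinarith [Real.exp_pos (-x), Real.rpow_nonneg hx.le c, Nat.one_le_iff_ne_zero.mpr (Nat.factorial_ne_zero (Nat.ceil c)), (by exact_mod_cast Nat.factorial_pos (Nat.ceil c) : (0:ℝ) < Nat.factorial (Nat.ceil c))]
  · have h2 : x ^ c ≤ x ^ (Nat.ceil c : ℝ) :=
      Real.rpow_le_rpow_of_exponent_le h1.le (Nat.le_ceil c)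
    rw [Real.rpow_natCast] at h2
    have h3 : x ^ (Nat.ceil c) ≤ (Nat.factorial (Nat.ceil c)) * Real.exp x := by
      have := Real.pow_div_factorial_le_exp (x := x) (by linarith) (Nat.ceil c)
      have hf : (0:ℝ) < (Nat.factorial (Nat.ceil c)) := by exact_mod_cast Nat.factorial_pos _
      calc x ^ (Nat.ceil c) = (x ^ (Nat.ceil c) / (Nat.factorial (Nat.ceil c))) * (Nat.factorial (Nat.ceil c)) := by
            field_simp
        _ ≤ Real.exp x * (Nat.factorial (Nat.ceil c)) := by nlinarith
        _ = (Nat.factorial (Nat.ceil c)) * Real.exp x := by ring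
    have h4 : x ^ c * Real.exp (-x) ≤ ((Nat.factorial (Nat.ceil c)) * Real.exp x) * Real.exp (-x) := by
      have := Real.exp_pos (-x)
      nlinarith
    rw [mul_assoc, ← Real.exp_add] at h4
    simp at h4
    linarith

lemma aux2 (c : ℝ) (hc : 0 ≤ c) (a t : ℝ) (ha : 0 < a) (ht : 0 < t) :
    t ^ (-c) * Real.exp (-(a/(2*t))) ≤
      ((Nat.factorial (Nat.ceil c)) + 1) * (2/a) ^ c := by
  set y := a/(2*t) with hy_def
  have hy : 0 < y := by positivity
  have h1 : t⁻¹ = 2/a * y := by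
    rw [hy_def]; field_simp
  have h2 : t ^ (-c) = (2/a) ^ c * y ^ c := by
    rw [Real.rpow_neg ht.le, ← Real.inv_rpow ht.le, h1,
      Real.mul_rpow (by positivity) hy.le]
  rw [h2]
  calc (2/a) ^ c * y ^ c * Real.exp (-y)
      = (2/a) ^ c * (y ^ c * Real.exp (-y)) := by ring
    _ ≤ (2/a) ^ c * ((Nat.factorial (Nat.ceil c)) + 1) := by
        exact mul_le_mul_of_nonneg_left (aux1 c hc y hy) (by positivity)
    _ = ((Nat.factorial (Nat.ceil c)) + 1) * (2/a) ^ c := by ring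

lemma aux3 (c : ℝ) (hc : 0 ≤ c) (a T t : ℝ) (ha : 0 < a) (hT : 0 < T)
    (ht : t ∈ Set.Ioc (0:ℝ) T) :
    t ^ (-c) * Real.exp (-a/t) ≤
      ((Nat.factorial (Nat.ceil c)) + 1) * (2/a) ^ c * Real.exp (-(a/(2*T))) := by
  obtain ⟨ht0, htT⟩ := ht
  have hsplit : Real.exp (-a/t) = Real.exp (-(a/(2*t))) * Real.exp (-(a/(2*t))) := by
    rw [← Real.exp_add]; congr 1; field_simp; ring
  have hmono : Real.exp (-(a/(2*t))) ≤ Real.exp (-(a/(2*T))) := by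
    apply Real.exp_le_exp.mpr
    rw [neg_le_neg_iff]
    gcongr
  rw [hsplit, ← mul_assoc]
  exact mul_le_mul (aux2 c hc a t ha ht0) hmono (Real.exp_pos _).le (by positivity)

lemma aux_meas (c a : ℝ) : Measurable (fun t : ℝ => t ^ (-c) * Real.exp (-a/t)) := by
  fun_prop

lemma aux_int (c : ℝ) (hc : 0 ≤ c) (a T : ℝ) (ha : 0 < a) (hT : 0 < T) :
    IntegrableOn (fun t : ℝ => t ^ (-c) * Real.exp (-a/t)) (Set.Ioc (0:ℝ) T) := by
  apply Integrable.mono'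
    (integrable_const (((Nat.factorial (Nat.ceil c)) + 1) * (2/a) ^ c * Real.exp (-(a/(2*T)))))
    ((aux_meas c a).aestronglyMeasurable.restrict)
  filter_upwards [ae_restrict_mem measurableSet_Ioc] with t ht
  rw [Real.norm_eq_abs, abs_of_nonneg (mul_nonneg (Real.rpow_nonneg ht.1.le _) (Real.exp_pos _).le)]
  exact aux3 c hc a T t ha hT ht

lemma aux_ftc (a T : ℝ) (ha : 0 < a) (hT : 0 < T) :
    (∫ t in Set.Ioc (0:ℝ) T, Real.exp (-a/t) * (a / t^2)) ≤ Real.exp (-a/T) := by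
  set g : ℝ → ℝ := fun t => Real.exp (-a/t) * (a / t^2) with hg
  have hderiv : ∀ x : ℝ, 0 < x → HasDerivAt (fun t => Real.exp (-a/t)) (g x) x := by
    intro x hx
    have h1 : HasDerivAt (fun t : ℝ => -a/t) (a/x^2) x := by
      have h := (hasDerivAt_inv hx.ne').const_mul (-a)
      have e1 : (fun t : ℝ => -a/t) = fun y : ℝ => -a * y⁻¹ := by
        funext t; rw [div_eq_mul_inv]
      rw [e1]
      exact h.congr_deriv (by ring)
    exact h1.exp
  have hgint : IntegrableOn g (Set.Ioc (0:ℝ) T) := by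
    have h := (aux_int 2 (by norm_num) a T ha hT).const_mul a
    apply Integrable.congr h
    filter_upwards [ae_restrict_mem measurableSet_Ioc] with t ht
    have ht0 : (0:ℝ) < t := ht.1
    have h2 : t ^ (-(2:ℝ)) = (t^2)⁻¹ := by
      rw [show (-(2:ℝ)) = -((2:ℕ):ℝ) by norm_num, Real.rpow_neg ht0.le, Real.rpow_natCast]
    show a * (t ^ (-(2:ℝ)) * Real.exp (-a/t)) = Real.exp (-a/t) * (a/t^2)
    rw [h2]
    field_simp
  set s : ℕ → Set ℝ := fun n => Set.Ioc (T/((n:ℝ)+1)) T with hs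
  have hsm : ∀ n, MeasurableSet (s n) := fun n => measurableSet_Ioc
  have hmono : Monotone s := by
    intro n m hnm
    apply Set.Ioc_subset_Ioc_left
    have hnm' : ((n:ℝ)+1) ≤ (m:ℝ)+1 := by exact_mod_cast Nat.succ_le_succ hnm
    gcongr
  have hunion : (⋃ n, s n) = Set.Ioc (0:ℝ) T := by
    ext x
    simp only [hs, Set.mem_iUnion, Set.mem_Ioc]
    constructor
    · rintro ⟨n, h1, h2⟩
      exact ⟨lt_of_le_of_lt (by positivity) h1, h2⟩
    · rintro ⟨h1, h2⟩
      obtain ⟨n, hn⟩ := exists_nat_gt (T/x)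
      refine ⟨n, ?_, h2⟩
      rw [div_lt_iff₀ (by positivity)]
      calc T = (T/x)*x := by field_simp
        _ < ((n:ℝ)+1)*x := by nlinarith
        _ = x*((n:ℝ)+1) := by ring
  have htend := tendsto_setIntegral_of_monotone hsm hmono (hunion ▸ hgint)
  rw [← hunion]
  apply le_of_tendsto htend
  apply Filter.Eventually.of_forall
  intro n
  have hε : 0 < T/((n:ℝ)+1) := by positivity
  have hεT : T/((n:ℝ)+1) ≤ T := by
    apply div_le_self hT.le
    have : (0:ℝ) ≤ n := Nat.cast_nonneg n
    linarith
  have hcont : IntervalIntegrable g volume (T/((n:ℝ)+1)) T := by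
    apply ContinuousOn.intervalIntegrable
    apply ContinuousOn.mul
    · apply Real.continuous_exp.comp_continuousOn
      apply ContinuousOn.div continuousOn_const continuousOn_id
      intro x hx
      rw [Set.uIcc_of_le hεT] at hx
      exact ne_of_gt (lt_of_lt_of_le hε hx.1)
    · apply ContinuousOn.div continuousOn_const (continuous_pow 2).continuousOn
      intro x hx
      rw [Set.uIcc_of_le hεT] at hx
      exact pow_ne_zero 2 (ne_of_gt (lt_of_lt_of_le hε hx.1))
  have key : ∫ t in (T/((n:ℝ)+1))..T, g t
      = Real.exp (-a/T) - Real.exp (-a/(T/((n:ℝ)+1))) := by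
    apply intervalIntegral.integral_eq_sub_of_hasDerivAt
    · intro x hx
      rw [Set.uIcc_of_le hεT] at hx
      exact hderiv x (lt_of_lt_of_le hε hx.1)
    · exact hcont
  rw [show (∫ t in s n, g t) = ∫ t in (T/((n:ℝ)+1))..T, g t from
    (intervalIntegral.integral_of_le hεT).symm, key]
  have h := Real.exp_pos (-a/(T/((n:ℝ)+1)))
  linarith

theorem stmt16 (b : ℝ) (hb : 1 < b) :
    (b ≤ 2 → ∀ a T : ℝ, 0 < T → T ≤ a →
      (∫ t in Set.Ioc (0 : ℝ) T, t ^ (-b) * Real.exp (-a / t)) ≤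
        a⁻¹ * T ^ (2 - b) * Real.exp (-a / T)) ∧
    (2 < b → ∃ C : ℝ, 0 < C ∧ ∀ a T : ℝ, 0 < T → T ≤ a →
      (∫ t in Set.Ioc (0 : ℝ) T, t ^ (-b) * Real.exp (-a / t)) ≤
        C * a ^ (1 - b) * Real.exp (-a / (2 * T))) := by
  constructor
  · intro hb2 a T hT hTa
    have ha : 0 < a := lt_of_lt_of_le hT hTa
    have hf_int := aux_int b (by linarith) a T ha hT
    have hg_int : IntegrableOn (fun t : ℝ => Real.exp (-a/t) * (a / t^2))
        (Set.Ioc (0:ℝ) T) := by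
      have h := (aux_int 2 (by norm_num) a T ha hT).const_mul a
      apply Integrable.congr h
      filter_upwards [ae_restrict_mem measurableSet_Ioc] with t ht
      have ht0 : (0:ℝ) < t := ht.1
      have h2 : t ^ (-(2:ℝ)) = (t^2)⁻¹ := by
        rw [show (-(2:ℝ)) = -((2:ℕ):ℝ) by norm_num, Real.rpow_neg ht0.le, Real.rpow_natCast]
      show a * (t ^ (-(2:ℝ)) * Real.exp (-a/t)) = Real.exp (-a/t) * (a/t^2)
      rw [h2]
      field_simp
    have hfg : ∀ t ∈ Set.Ioc (0:ℝ) T, t ^ (-b) * Real.exp (-a/t) ≤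
        (a⁻¹ * T^(2-b)) * (Real.exp (-a/t) * (a/t^2)) := by
      intro t ht
      have ht0 : (0:ℝ) < t := ht.1
      have h1 : t ^ (-b) = t ^ (2-b) * (t^2)⁻¹ := by
        rw [show ((t:ℝ)^2)⁻¹ = t ^ (-(2:ℝ)) by
          rw [show (-(2:ℝ)) = -((2:ℕ):ℝ) by norm_num, Real.rpow_neg ht0.le,
            Real.rpow_natCast],
          ← Real.rpow_add ht0]
        congr 1
        ring
      have h2 : t ^ (2-b) ≤ T ^ (2-b) := Real.rpow_le_rpow ht0.le ht.2 (by linarith)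
      have key : (a⁻¹ * T^(2-b)) * (Real.exp (-a/t) * (a/t^2)) =
          T^(2-b) * ((t^2)⁻¹ * Real.exp (-a/t)) := by
        field_simp
      rw [key, h1]
      have h3 : (0:ℝ) ≤ (t^2)⁻¹ * Real.exp (-a/t) := by positivity
      calc t ^ (2-b) * (t^2)⁻¹ * Real.exp (-a/t)
          = t ^ (2-b) * ((t^2)⁻¹ * Real.exp (-a/t)) := by ring
        _ ≤ T ^ (2-b) * ((t^2)⁻¹ * Real.exp (-a/t)) :=
            mul_le_mul_of_nonneg_right h2 h3
    calc (∫ t in Set.Ioc (0:ℝ) T, t ^ (-b) * Real.exp (-a / t))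
        ≤ ∫ t in Set.Ioc (0:ℝ) T, (a⁻¹ * T^(2-b)) * (Real.exp (-a/t) * (a/t^2)) :=
          setIntegral_mono_on hf_int (hg_int.const_mul _) measurableSet_Ioc hfg
      _ = (a⁻¹ * T^(2-b)) * ∫ t in Set.Ioc (0:ℝ) T, Real.exp (-a/t) * (a/t^2) :=
          MeasureTheory.integral_const_mul _ _
      _ ≤ (a⁻¹ * T^(2-b)) * Real.exp (-a/T) :=
          mul_le_mul_of_nonneg_left (aux_ftc a T ha hT) (by positivity)
      _ = a⁻¹ * T^(2-b) * Real.exp (-a/T) := by ring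
  · intro hb2
    refine ⟨((Nat.factorial (Nat.ceil b) : ℝ) + 1) * 2^b, by positivity, ?_⟩
    intro a T hT hTa
    have ha : 0 < a := lt_of_lt_of_le hT hTa
    set M : ℝ := (Nat.factorial (Nat.ceil b) : ℝ) + 1 with hM
    have hM0 : 0 < M := by positivity
    have hnorm := norm_setIntegral_le_of_norm_le_const (μ := volume)
      (s := Set.Ioc (0:ℝ) T) (C := M * (2/a)^b * Real.exp (-(a/(2*T))))
      (f := fun t : ℝ => t ^ (-b) * Real.exp (-a/t))
      measure_Ioc_lt_top
      (fun t ht => by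
        rw [Real.norm_eq_abs, abs_of_nonneg (mul_nonneg (Real.rpow_nonneg ht.1.le _)
          (Real.exp_pos _).le)]
        exact aux3 b (by linarith) a T t ha hT ht)
    rw [measureReal_def, Real.volume_Ioc] at hnorm
    have hvol : (ENNReal.ofReal (T - 0)).toReal = T := by
      rw [ENNReal.toReal_ofReal (by linarith)]
      ring
    rw [hvol] at hnorm
    have h1 : (∫ t in Set.Ioc (0:ℝ) T, t ^ (-b) * Real.exp (-a / t)) ≤
        M * (2/a)^b * Real.exp (-(a/(2*T))) * T :=
      le_trans (le_abs_self _) hnorm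
    refine le_trans h1 ?_
    have hab : (0:ℝ) < a ^ b := Real.rpow_pos_of_pos ha b
    have hE : (0:ℝ) < Real.exp (-(a/(2*T))) := Real.exp_pos _
    have hdr : (2/a)^b = 2^b / a^b := Real.div_rpow (by norm_num) ha.le b
    have hsub : a ^ (1-b) = a / a^b := by
      rw [Real.rpow_sub ha, Real.rpow_one]
    have hneg : -a/(2*T) = -(a/(2*T)) := neg_div _ _
    rw [hdr, hsub, hneg]
    calc M * (2^b / a^b) * Real.exp (-(a/(2*T))) * T
        = (M * 2^b * Real.exp (-(a/(2*T))) / a^b) * T := by ring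
      _ ≤ (M * 2^b * Real.exp (-(a/(2*T))) / a^b) * a := by
          apply mul_le_mul_of_nonneg_left hTa
          positivity
      _ = M * 2^b * (a / a^b) * Real.exp (-(a/(2*T))) := by ring
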